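/- Let $\bar{X}, X \in \mathbb{R}^{t \times r}$, let $\rho > 0$, define $\bar{\Omega} = \rho I + \bar{X}^\top \bar{X}$, $\Omega = \rho I + X^\top X$, and $\Xi = X - \bar{X}$. Then for every vector $a \in \mathbb{R}^r$ it holds that $\|a\|_{\bar{\Omega}^{-1}} \leq (1 + \rho^{-1/2}\|\Xi\|)\,\|a\|_{\Omega^{-1}}$. -/

import Mathlib

open Matrix

/-- Spectral (operator) norm of a real matrix, viewed as the operator norm of the
induced linear map between Euclidean spaces. -/
noncomputable def opNorm {n m : ℕ} (A : Matrix (Fin n) (Fin m) ℝ) : ℝ :=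
  ‖LinearMap.toContinuousLinearMap (Matrix.toEuclideanLin A)‖

/-- Euclidean norm of a vector. -/
noncomputable def vecNorm {d : ℕ} (a : Fin d → ℝ) : ℝ := Real.sqrt (a ⬝ᵥ a)

/-- Weighted norm `‖a‖_Ω = sqrt (aᵀ Ω a)`. -/
noncomputable def wnorm {r : ℕ} (Ω : Matrix (Fin r) (Fin r) ℝ) (a : Fin r → ℝ) : ℝ :=
  Real.sqrt (a ⬝ᵥ (Ω *ᵥ a))

/-- `k`-th largest singular value of a matrix, characterized as the distance (in the
spectral norm) to the set of matrices of rank `< k` (approximation numbers). -/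
noncomputable def singVal {n m : ℕ} (k : ℕ) (A : Matrix (Fin n) (Fin m) ℝ) : ℝ :=
  sInf {c | ∃ B : Matrix (Fin n) (Fin m) ℝ, B.rank < k ∧ c = opNorm (A - B)}

lemma dp_self_nonneg {d : ℕ} (a : Fin d → ℝ) : 0 ≤ a ⬝ᵥ a :=
  Finset.sum_nonneg fun _ _ => mul_self_nonneg _

lemma vecNorm_eq_norm {d : ℕ} (a : Fin d → ℝ) :
    vecNorm a = ‖(WithLp.equiv 2 (Fin d → ℝ)).symm a‖ := by
  rw [vecNorm, EuclideanSpace.norm_eq]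
  congr 1
  simp [dotProduct, Real.norm_eq_abs, sq_abs, pow_two]

lemma sq_vecNorm {d : ℕ} (a : Fin d → ℝ) : vecNorm a ^ 2 = a ⬝ᵥ a := by
  rw [vecNorm, Real.sq_sqrt (dp_self_nonneg a)]

lemma vecNorm_nonneg {d : ℕ} (a : Fin d → ℝ) : 0 ≤ vecNorm a := Real.sqrt_nonneg _

lemma vecNorm_add_le {d : ℕ} (a b : Fin d → ℝ) :
    vecNorm (a + b) ≤ vecNorm a + vecNorm b := by
  rw [vecNorm_eq_norm, vecNorm_eq_norm, vecNorm_eq_norm]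
  rw [show (WithLp.equiv 2 (Fin d → ℝ)).symm (a + b)
      = (WithLp.equiv 2 (Fin d → ℝ)).symm a + (WithLp.equiv 2 (Fin d → ℝ)).symm b from rfl]
  exact norm_add_le _ _

lemma mulVec_vecNorm_le {n m : ℕ} (A : Matrix (Fin n) (Fin m) ℝ) (b : Fin m → ℝ) :
    vecNorm (A *ᵥ b) ≤ opNorm A * vecNorm b := by
  rw [vecNorm_eq_norm, vecNorm_eq_norm, ← show Matrix.toEuclideanLin A ((WithLp.equiv 2 (Fin m → ℝ)).symm b)
      = (WithLp.equiv 2 (Fin n → ℝ)).symm (A *ᵥ b) from rfl]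
  calc ‖Matrix.toEuclideanLin A ((WithLp.equiv 2 (Fin m → ℝ)).symm b)‖
      = ‖(LinearMap.toContinuousLinearMap (Matrix.toEuclideanLin A))
          ((WithLp.equiv 2 (Fin m → ℝ)).symm b)‖ := by simp
    _ ≤ opNorm A * ‖(WithLp.equiv 2 (Fin m → ℝ)).symm b‖ :=
        (LinearMap.toContinuousLinearMap (Matrix.toEuclideanLin A)).le_opNorm _

lemma quad_form {t r : ℕ} (X : Matrix (Fin t) (Fin r) ℝ) (ρ : ℝ) (x y : Fin r → ℝ) :
    x ⬝ᵥ ((ρ • (1 : Matrix (Fin r) (Fin r) ℝ) + Xᵀ * X) *ᵥ y)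
      = ρ * (x ⬝ᵥ y) + (X *ᵥ x) ⬝ᵥ (X *ᵥ y) := by
  rw [Matrix.add_mulVec, dotProduct_add, Matrix.smul_mulVec, Matrix.one_mulVec,
    dotProduct_smul, ← Matrix.mulVec_mulVec, Matrix.dotProduct_mulVec,
    Matrix.vecMul_transpose, smul_eq_mul]

lemma posdef_reg {t r : ℕ} (X : Matrix (Fin t) (Fin r) ℝ) {ρ : ℝ} (hρ : 0 < ρ) :
    (ρ • (1 : Matrix (Fin r) (Fin r) ℝ) + Xᵀ * X).PosDef := by
  refine Matrix.PosDef.add_posSemidef ?_ (by simpa using Matrix.posSemidef_conjTranspose_mul_self X)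
  rw [Matrix.smul_one_eq_diagonal]
  exact Matrix.posDef_diagonal_iff.mpr fun _ => hρ

lemma key_scalar {g k s p q : ℝ} (hg : 0 < g) (hk : 0 ≤ k) (hs : 0 ≤ s) (hp : 0 ≤ p)
    (hq : 0 ≤ q) (hqle : q ≤ p + k * s) :
    g * g * s ^ 2 + q ^ 2 ≤ (1 + g⁻¹ * k) ^ 2 * (g * g * s ^ 2 + p ^ 2) := by
  have h1 : (1 + g⁻¹ * k) = (g + k) / g := by field_simp
  have hq2 : q ^ 2 ≤ (p + k * s) ^ 2 := by nlinarith
  rw [h1, div_pow, div_mul_eq_mul_div, le_div_iff₀ (by positivity : (0:ℝ) < g ^ 2)]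
  nlinarith [mul_nonneg (sq_nonneg g) (sub_nonneg.mpr hq2),
    mul_nonneg (mul_nonneg hg.le hk) (sq_nonneg (g * s - p)),
    mul_nonneg (mul_nonneg hk hk) (mul_nonneg hp hp),
    mul_nonneg (mul_nonneg (mul_nonneg hg.le hg.le) hg.le) (mul_nonneg hk (mul_nonneg hs hs)),
    mul_nonneg (mul_nonneg hg.le hk) (mul_nonneg hp hp)]

/-- comparison of inverse weighted norms under a design-matrix perturbation. -/
theorem stmt_2 {t r : ℕ} (Xbar X : Matrix (Fin t) (Fin r) ℝ) (ρ : ℝ) (hρ : 0 < ρ)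
    (Ωbar Ω : Matrix (Fin r) (Fin r) ℝ) (Ξ : Matrix (Fin t) (Fin r) ℝ)
    (hΩbar : Ωbar = ρ • (1 : Matrix (Fin r) (Fin r) ℝ) + Xbarᵀ * Xbar)
    (hΩ : Ω = ρ • (1 : Matrix (Fin r) (Fin r) ℝ) + Xᵀ * X)
    (hΞ : Ξ = X - Xbar) :
    ∀ a : Fin r → ℝ, wnorm Ωbar⁻¹ a ≤ (1 + (Real.sqrt ρ)⁻¹ * opNorm Ξ) * wnorm Ω⁻¹ a := by
  intro a
  have hk0 : 0 ≤ opNorm Ξ := norm_nonneg _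
  obtain ⟨g, hgdef⟩ : ∃ g, Real.sqrt ρ = g := ⟨_, rfl⟩
  have hg : 0 < g := hgdef ▸ Real.sqrt_pos.mpr hρ
  have hg2 : g * g = ρ := by rw [← hgdef]; exact Real.mul_self_sqrt hρ.le
  rw [hgdef]
  set c : ℝ := 1 + g⁻¹ * opNorm Ξ with hc
  have hc0 : 0 < c := by positivity
  -- quadratic form identities
  have qΩ : ∀ x y, x ⬝ᵥ (Ω *ᵥ y) = ρ * (x ⬝ᵥ y) + (X *ᵥ x) ⬝ᵥ (X *ᵥ y) := by
    intro x y; rw [hΩ]; exact quad_form X ρ x y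
  have qΩbar : ∀ x y, x ⬝ᵥ (Ωbar *ᵥ y) = ρ * (x ⬝ᵥ y) + (Xbar *ᵥ x) ⬝ᵥ (Xbar *ᵥ y) := by
    intro x y; rw [hΩbar]; exact quad_form Xbar ρ x y
  have hnnΩ : ∀ x, 0 ≤ x ⬝ᵥ (Ω *ᵥ x) := fun x => by
    rw [qΩ]
    exact add_nonneg (mul_nonneg hρ.le (dp_self_nonneg x)) (dp_self_nonneg _)
  have hnnΩbar : ∀ x, 0 ≤ x ⬝ᵥ (Ωbar *ᵥ x) := fun x => by
    rw [qΩbar]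
    exact add_nonneg (mul_nonneg hρ.le (dp_self_nonneg x)) (dp_self_nonneg _)
  have hsym : ∀ x y, x ⬝ᵥ (Ω *ᵥ y) = y ⬝ᵥ (Ω *ᵥ x) := by
    intro x y
    rw [qΩ, qΩ, dotProduct_comm x y, dotProduct_comm (X *ᵥ x)]
  -- inverses
  have hPD : Ω.PosDef := hΩ ▸ posdef_reg X hρ
  have hPDbar : Ωbar.PosDef := hΩbar ▸ posdef_reg Xbar hρ
  obtain ⟨u, hu⟩ : ∃ u, Ωbar⁻¹ *ᵥ a = u := ⟨_, rfl⟩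
  obtain ⟨v, hv⟩ : ∃ v, Ω⁻¹ *ᵥ a = v := ⟨_, rfl⟩
  have hau : Ωbar *ᵥ u = a := by
    rw [← hu, Matrix.mulVec_mulVec, Matrix.mul_nonsing_inv _ hPDbar.det_pos.ne'.isUnit,
      Matrix.one_mulVec]
  have hav : Ω *ᵥ v = a := by
    rw [← hv, Matrix.mulVec_mulVec, Matrix.mul_nonsing_inv _ hPD.det_pos.ne'.isUnit,
      Matrix.one_mulVec]
  obtain ⟨P, hPdef⟩ : ∃ P, u ⬝ᵥ (Ωbar *ᵥ u) = P := ⟨_, rfl⟩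
  obtain ⟨Q, hQdef⟩ : ∃ Q, v ⬝ᵥ (Ω *ᵥ v) = Q := ⟨_, rfl⟩
  obtain ⟨S, hSdef⟩ : ∃ S, v ⬝ᵥ (Ω *ᵥ u) = S := ⟨_, rfl⟩
  obtain ⟨T, hTdef⟩ : ∃ T, u ⬝ᵥ (Ω *ᵥ u) = T := ⟨_, rfl⟩
  have haP : a ⬝ᵥ u = P := by rw [← hPdef, ← hau, dotProduct_comm]
  have haQ : a ⬝ᵥ v = Q := by rw [← hQdef, ← hav, dotProduct_comm]
  have haS : a ⬝ᵥ u = S := by rw [← hSdef, ← hav, dotProduct_comm, hsym u v]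
  -- Cauchy-Schwarz: S^2 ≤ T * Q
  have hCS : S ^ 2 ≤ T * Q := by
    have hquad : ∀ s : ℝ, 0 ≤ T * (s * s) + (2 * S) * s + Q := by
      intro s
      have h0 : 0 ≤ (s • u + v) ⬝ᵥ (Ω *ᵥ (s • u + v)) := hnnΩ _
      have hexp : (s • u + v) ⬝ᵥ (Ω *ᵥ (s • u + v)) = T * (s * s) + (2 * S) * s + Q := by
        rw [Matrix.mulVec_add, Matrix.mulVec_smul, add_dotProduct,
          dotProduct_add, dotProduct_add, smul_dotProduct,
          smul_dotProduct, dotProduct_smul, dotProduct_smul,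
          hsym u v, hTdef, hQdef, hSdef]
        simp only [smul_eq_mul]
        ring
      linarith [hexp ▸ h0]
    have hd := discrim_le_zero hquad
    rw [discrim] at hd
    nlinarith [hd]
  -- key comparison: T ≤ c^2 * P
  have hTP : T ≤ c ^ 2 * P := by
    have hqle : vecNorm (X *ᵥ u) ≤ vecNorm (Xbar *ᵥ u) + opNorm Ξ * vecNorm u := by
      have hXu : X *ᵥ u = Xbar *ᵥ u + Ξ *ᵥ u := by
        rw [hΞ, Matrix.sub_mulVec]; abel
      calc vecNorm (X *ᵥ u) = vecNorm (Xbar *ᵥ u + Ξ *ᵥ u) := by rw [hXu]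
        _ ≤ vecNorm (Xbar *ᵥ u) + vecNorm (Ξ *ᵥ u) := vecNorm_add_le _ _
        _ ≤ vecNorm (Xbar *ᵥ u) + opNorm Ξ * vecNorm u := by
            linarith [mulVec_vecNorm_le Ξ u]
    have hT : T = ρ * vecNorm u ^ 2 + vecNorm (X *ᵥ u) ^ 2 := by
      rw [← hTdef, qΩ, sq_vecNorm, sq_vecNorm]
    have hP : P = ρ * vecNorm u ^ 2 + vecNorm (Xbar *ᵥ u) ^ 2 := by
      rw [← hPdef, qΩbar, sq_vecNorm, sq_vecNorm]
    rw [hT, hP, hc, ← hg2]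
    exact key_scalar hg hk0 (vecNorm_nonneg _) (vecNorm_nonneg _) (vecNorm_nonneg _) hqle
  -- finish
  have hP0 : 0 ≤ P := hPdef ▸ hnnΩbar u
  have hQ0 : 0 ≤ Q := hQdef ▸ hnnΩ v
  have hPQ : P ^ 2 ≤ c ^ 2 * P * Q := by
    calc P ^ 2 = S ^ 2 := by rw [← haP, haS]
      _ ≤ T * Q := hCS
      _ ≤ c ^ 2 * P * Q := mul_le_mul_of_nonneg_right hTP hQ0
  have hfin : P ≤ c ^ 2 * Q := by
    rcases eq_or_lt_of_le hP0 with h | h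
    · rw [← h]; positivity
    · exact le_of_mul_le_mul_left (by nlinarith [hPQ]) h
  have h1 : wnorm Ωbar⁻¹ a = Real.sqrt P := by rw [wnorm, hu, haP]
  have h2 : wnorm Ω⁻¹ a = Real.sqrt Q := by rw [wnorm, hv, haQ]
  rw [h1, h2]
  calc Real.sqrt P ≤ Real.sqrt (c ^ 2 * Q) := Real.sqrt_le_sqrt hfin
    _ = c * Real.sqrt Q := by
        rw [Real.sqrt_mul (sq_nonneg c), Real.sqrt_sq hc0.le]
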